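/- Let n ≥ 1 and let Φ : (ℂ*)ⁿ → (ℂ*)ⁿ be an injective continuous group homomorphism, where ℂ* = ℂ \ {0} is the multiplicative group of nonzero complex numbers and (ℂ*)ⁿ carries the product topology and componentwise multiplication. Then Φ is surjective, and hence a topological group automorphism of (ℂ*)ⁿ (its inverse is also continuous). -/

import Mathlib

open Topology Set

noncomputable section Aux16

namespace Aux16

lemma valEmb : IsEmbedding (Units.val : ℂˣ → ℂ) := Units.isEmbedding_val₀

lemma valOpenEmb : IsOpenEmbedding (Units.val : ℂˣ → ℂ) := by
  refine ⟨valEmb, ?_⟩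
  have h : range (Units.val : ℂˣ → ℂ) = {(0 : ℂ)}ᶜ := by
    ext z
    constructor
    · rintro ⟨u, rfl⟩; exact u.ne_zero
    · intro hz; exact ⟨Units.mk0 z hz, rfl⟩
  rw [h]; exact isOpen_compl_singleton

instance : T2Space ℂˣ := valEmb.t2Space

instance : LocallyCompactSpace ℂˣ :=
  valEmb.isInducing.locallyCompactSpace valOpenEmb.isOpen_range.isLocallyClosed

instance : SecondCountableTopology ℂˣ := valEmb.secondCountableTopology

variable {n : ℕ}

/-- componentwise log-modulus -/
def lam (x : Fin n → ℂˣ) : Fin n → ℝ := fun i => Real.log (‖(x i : ℂ)‖)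

lemma lam_mul (x y : Fin n → ℂˣ) : lam (x * y) = lam x + lam y := by
  funext i
  have hx : ‖(x i : ℂ)‖ ≠ 0 := norm_ne_zero_iff.mpr (Units.ne_zero _)
  have hy : ‖(y i : ℂ)‖ ≠ 0 := norm_ne_zero_iff.mpr (Units.ne_zero _)
  simp only [lam, Pi.mul_apply, Units.val_mul, map_mul, norm_mul, Pi.add_apply]
  exact Real.log_mul hx hy

lemma lam_inv (x : Fin n → ℂˣ) : lam x⁻¹ = -lam x := by
  funext i
  simp [lam, Pi.inv_apply, Real.log_inv]

lemma continuous_lam : Continuous (lam : (Fin n → ℂˣ) → Fin n → ℝ) := by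
  refine continuous_pi fun i => ?_
  have h1 : Continuous fun x : Fin n → ℂˣ => ‖(x i : ℂ)‖ :=
    continuous_norm.comp (valEmb.continuous.comp (continuous_apply i))
  exact h1.log fun x => norm_ne_zero_iff.mpr (Units.ne_zero _)

/-- section of lam: componentwise real exponential -/
def sec (t : Fin n → ℝ) : Fin n → ℂˣ := fun i =>
  Units.mk0 ((Real.exp (t i) : ℝ) : ℂ) (by
    exact_mod_cast Complex.ofReal_ne_zero.mpr (Real.exp_ne_zero (t i)))

lemma sec_add (t s : Fin n → ℝ) : sec (t + s) = sec t * sec s := by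
  funext i
  apply Units.ext
  simp [sec, Real.exp_add]

lemma continuous_sec : Continuous (sec : (Fin n → ℝ) → Fin n → ℂˣ) := by
  refine continuous_pi fun i => ?_
  refine valEmb.isInducing.continuous_iff.mpr ?_
  show Continuous fun t : Fin n → ℝ => ((Real.exp (t i) : ℝ) : ℂ)
  exact Complex.continuous_ofReal.comp (Real.continuous_exp.comp (continuous_apply i))

lemma lam_sec (t : Fin n → ℝ) : lam (sec t) = t := by
  funext i
  simp [lam, sec, Complex.norm_real, abs_of_pos (Real.exp_pos _), Real.log_exp]

/-- the compact torus -/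
def T (n : ℕ) : Set (Fin n → ℂˣ) := {x | ∀ i, ‖(x i : ℂ)‖ = 1}

lemma lam_eq_zero_iff {x : Fin n → ℂˣ} : lam x = 0 ↔ x ∈ T n := by
  constructor
  · intro h i
    have hi := congrFun h i
    have hpos : 0 < ‖(x i : ℂ)‖ := norm_pos_iff.mpr (Units.ne_zero _)
    calc ‖(x i : ℂ)‖ = Real.exp (Real.log (‖(x i : ℂ)‖)) :=
          (Real.exp_log hpos).symm
      _ = 1 := by rw [show Real.log (‖(x i : ℂ)‖) = 0 from hi, Real.exp_zero]
  · intro h; funext i; simp [lam, h i]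

lemma T_pow {u : Fin n → ℂˣ} (hu : u ∈ T n) (k : ℕ) : u ^ k ∈ T n := by
  intro i
  have : ((u ^ k) i : ℂ) = (u i : ℂ) ^ k := by
    simp [Pi.pow_apply]
  rw [this, norm_pow, hu i, one_pow]

lemma T_inv {u : Fin n → ℂˣ} (hu : u ∈ T n) : u⁻¹ ∈ T n := by
  intro i
  have : ((u⁻¹) i : ℂ) = (u i : ℂ)⁻¹ := by simp [Pi.inv_apply]
  rw [this, norm_inv, hu i, inv_one]

/-- parametrization of the torus by angles -/
def torusMap (θ : Fin n → ℝ) : Fin n → ℂˣ := fun i =>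
  Units.mk0 (Complex.exp ((θ i : ℂ) * Complex.I)) (Complex.exp_ne_zero _)

lemma continuous_torusMap : Continuous (torusMap : (Fin n → ℝ) → Fin n → ℂˣ) := by
  refine continuous_pi fun i => ?_
  refine valEmb.isInducing.continuous_iff.mpr ?_
  show Continuous fun θ : Fin n → ℝ => Complex.exp ((θ i : ℂ) * Complex.I)
  exact Complex.continuous_exp.comp
    ((Complex.continuous_ofReal.comp (continuous_apply i)).mul continuous_const)

lemma torusMap_mem_T (θ : Fin n → ℝ) : torusMap θ ∈ T n := fun i =>
  Complex.norm_exp_ofReal_mul_I _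

lemma T_eq_image :
    T n = torusMap '' (Set.pi univ fun _ : Fin n => Set.Icc (-4 : ℝ) 4) := by
  apply Set.Subset.antisymm
  · intro x hx
    refine ⟨fun i => Complex.arg (x i : ℂ), ?_, ?_⟩
    · intro i _
      constructor
      · have := Complex.neg_pi_lt_arg (x i : ℂ)
        nlinarith [Real.pi_le_four]
      · have := Complex.arg_le_pi (x i : ℂ)
        nlinarith [Real.pi_le_four]
    · funext i
      apply Units.ext
      have h := Complex.norm_mul_exp_arg_mul_I (x i : ℂ)
      rw [hx i] at h
      simpa [torusMap] using h
  · rintro y ⟨θ, -, rfl⟩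
    exact torusMap_mem_T θ

lemma isCompact_T : IsCompact (T n) := by
  rw [T_eq_image]
  exact (isCompact_univ_pi fun _ => isCompact_Icc).image continuous_torusMap

/-- torsion elements -/
def Dset (n : ℕ) : Set (Fin n → ℂˣ) := {x | ∃ m : ℕ, 0 < m ∧ x ^ m = 1}

lemma Dset_subset_T : Dset n ⊆ T n := by
  rintro x ⟨m, hm, hx⟩ i
  have h1 : (x i : ℂ) ^ m = 1 := by
    have h2 : (x i) ^ m = 1 := by simpa [Pi.pow_apply] using congrFun hx i
    have := congrArg Units.val h2
    simpa using this
  have habs : ‖(x i : ℂ)‖ ^ m = 1 := by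
    rw [← norm_pow, h1, norm_one]
  have hpos : 0 < ‖(x i : ℂ)‖ := norm_pos_iff.mpr (Units.ne_zero _)
  have hlog : (m : ℝ) * Real.log (‖(x i : ℂ)‖) = 0 := by
    rw [← Real.log_pow, habs, Real.log_one]
  have : Real.log (‖(x i : ℂ)‖) = 0 := by
    rcases mul_eq_zero.mp hlog with h | h
    · exact absurd h (Nat.cast_ne_zero.mpr hm.ne')
    · exact h
  calc ‖(x i : ℂ)‖ = Real.exp (Real.log (‖(x i : ℂ)‖)) :=
        (Real.exp_log hpos).symm
    _ = 1 := by rw [this, Real.exp_zero]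

lemma Dset_subset_image (Φ : (Fin n → ℂˣ) →* (Fin n → ℂˣ))
    (hinj : Function.Injective Φ) : Dset n ⊆ Φ '' Dset n := by
  rintro x ⟨m, hm, hx⟩
  haveI : NeZero m := ⟨hm.ne'⟩
  set S : Set (Fin n → ℂˣ) := {y | y ^ m = 1} with hS
  have hfino : ((rootsOfUnity m ℂ : Subgroup ℂˣ) : Set ℂˣ).Finite := by
    have : Finite (((rootsOfUnity m ℂ : Subgroup ℂˣ) : Set ℂˣ) : Type) :=
      inferInstanceAs (Finite (rootsOfUnity m ℂ))
    exact Set.toFinite _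
  have hfin : S.Finite := by
    refine Set.Finite.subset (Set.Finite.pi'
      (t := fun _ : Fin n => ((rootsOfUnity m ℂ : Subgroup ℂˣ) : Set ℂˣ))
      (fun _ => hfino)) ?_
    intro y hy i
    have hyi : (y i) ^ m = 1 := by
      have := congrFun hy i
      simpa [Pi.pow_apply] using this
    exact (mem_rootsOfUnity m (y i)).mpr hyi
  have hmaps : Set.MapsTo Φ S S := by
    intro y hy
    show Φ y ^ m = 1
    rw [← map_pow, hy, map_one]
  have hbij := (Set.Finite.injOn_iff_bijOn_of_mapsTo hfin hmaps).1 hinj.injOn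
  obtain ⟨y, hy, hyx⟩ := hbij.surjOn hx
  exact ⟨y, ⟨m, hm, hy⟩, hyx⟩

lemma T_subset_closure_Dset : T n ⊆ closure (Dset n) := by
  intro x hx
  set θ : Fin n → ℝ := fun i => Complex.arg (x i : ℂ) with hθ
  have hxθ : torusMap θ = x := by
    funext i
    apply Units.ext
    have h := Complex.norm_mul_exp_arg_mul_I (x i : ℂ)
    rw [hx i] at h
    simpa [torusMap] using h
  set h : (Fin n → ℚ) → (Fin n → ℝ) := fun q i => 2 * Real.pi * (q i : ℝ) with hh
  have hg1 : DenseRange (fun q : ℚ => 2 * Real.pi * (q : ℝ)) := by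
    have h1 : DenseRange ((↑) : ℚ → ℝ) := Rat.denseRange_cast
    have h2 : Function.Surjective (fun r : ℝ => 2 * Real.pi * r) := by
      intro y
      exact ⟨y / (2 * Real.pi), by field_simp⟩
    exact (h2.denseRange.comp h1 (by continuity) : _)
  have hrange : range h = Set.pi univ fun _ : Fin n =>
      range (fun q : ℚ => 2 * Real.pi * (q : ℝ)) := by
    ext ψ
    constructor
    · rintro ⟨q, rfl⟩ i _; exact ⟨q i, rfl⟩
    · intro hψ
      choose q hq using fun i => hψ i (mem_univ i)
      exact ⟨q, funext fun i => (hq i)⟩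
  have hdense : Dense (range h) := by
    rw [dense_iff_closure_eq, hrange, closure_pi_set]
    simp [hg1.closure_range]
  have hsub : torusMap '' range h ⊆ Dset n := by
    rintro y ⟨ψ, ⟨q, rfl⟩, rfl⟩
    refine ⟨∏ i, (q i).den, Finset.prod_pos fun i _ => (q i).pos, ?_⟩
    set m : ℕ := ∏ i, (q i).den with hm
    funext i
    apply Units.ext
    have hpow : (((torusMap (h q)) ^ m) i : ℂ) =
        Complex.exp ((h q i : ℂ) * Complex.I) ^ m := by
      simp [torusMap, Pi.pow_apply]
    rw [hpow]
    obtain ⟨c, hc⟩ := Finset.dvd_prod_of_mem (fun i => (q i).den) (Finset.mem_univ i)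
    set k : ℤ := (q i).num * c with hk
    have hqk : (m : ℚ) * q i = (k : ℚ) := by
      rw [hm, hc]
      push_cast
      rw [mul_comm ((q i).den : ℚ) (c : ℚ), mul_assoc, Rat.den_mul_eq_num, hk]
      push_cast
      ring
    have hqkC : (m : ℂ) * (q i : ℂ) = (k : ℂ) := by exact_mod_cast hqk
    rw [← Complex.exp_nat_mul]
    have harg : (m : ℂ) * ((h q i : ℝ) * Complex.I) =
        (k : ℂ) * (2 * (Real.pi : ℂ) * Complex.I) := by
      have : (h q i : ℂ) = 2 * (Real.pi : ℂ) * (q i : ℂ) := by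
        simp [hh]
      rw [this]
      linear_combination (2 * (Real.pi : ℂ) * Complex.I) * hqkC
    rw [harg]
    have := Complex.exp_int_mul_two_pi_mul_I k
    simpa using this
  have hθmem : θ ∈ closure (range h) := by
    rw [hdense.closure_eq]; trivial
  have : torusMap θ ∈ closure (torusMap '' range h) :=
    image_closure_subset_closure_image continuous_torusMap (mem_image_of_mem _ hθmem)
  rw [hxθ] at this
  exact closure_mono hsub this

lemma abs_le_one_on_T (Φ : (Fin n → ℂˣ) →* (Fin n → ℂˣ)) (hcont : Continuous Φ) :
    ∀ v ∈ T n, ∀ i, ‖(Φ v i : ℂ)‖ ≤ 1 := by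
  intro v hv i
  have hcompact : IsCompact (Φ '' T n) := isCompact_T.image hcont
  have hconti : ContinuousOn (fun x : Fin n → ℂˣ => ‖(x i : ℂ)‖) (Φ '' T n) :=
    (continuous_norm.comp (valEmb.continuous.comp (continuous_apply i))).continuousOn
  obtain ⟨B, hB⟩ := hcompact.bddAbove_image hconti
  rw [mem_upperBounds] at hB
  have key : ∀ w ∈ T n, ‖(Φ w i : ℂ)‖ ≤ B := fun w hw =>
    hB _ (mem_image_of_mem _ (mem_image_of_mem Φ hw))
  set c := ‖(Φ v i : ℂ)‖ with hc
  by_contra hlt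
  push_neg at hlt
  obtain ⟨K, hK⟩ := pow_unbounded_of_one_lt B hlt
  have hpow : c ^ K ≤ B := by
    have hvK : v ^ K ∈ T n := T_pow hv K
    have h1 := key _ hvK
    have h2 : ((Φ (v ^ K)) i : ℂ) = ((Φ v) i : ℂ) ^ K := by
      rw [map_pow]
      simp [Pi.pow_apply]
    rw [h2, norm_pow] at h1
    exact h1
  exact absurd hpow (not_le.2 hK)

lemma mapsTo_T (Φ : (Fin n → ℂˣ) →* (Fin n → ℂˣ)) (hcont : Continuous Φ) :
    Set.MapsTo Φ (T n) (T n) := by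
  intro u hu i
  have h1 : ‖(Φ u i : ℂ)‖ ≤ 1 := abs_le_one_on_T Φ hcont u hu i
  have h2 : ‖(Φ u⁻¹ i : ℂ)‖ ≤ 1 := abs_le_one_on_T Φ hcont u⁻¹ (T_inv hu) i
  have h3 : ((Φ u⁻¹) i : ℂ) = ((Φ u) i : ℂ)⁻¹ := by
    rw [map_inv]
    simp [Pi.inv_apply]
  rw [h3, norm_inv] at h2
  have hpos : 0 < ‖(Φ u i : ℂ)‖ := norm_pos_iff.mpr (Units.ne_zero _)
  have h4 : 1 ≤ ‖(Φ u i : ℂ)‖ := by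
    calc 1 = ‖(Φ u i : ℂ)‖ * (‖(Φ u i : ℂ)‖)⁻¹ :=
          (mul_inv_cancel₀ hpos.ne').symm
      _ ≤ ‖(Φ u i : ℂ)‖ * 1 := by
          exact mul_le_mul_of_nonneg_left h2 hpos.le
      _ = ‖(Φ u i : ℂ)‖ := mul_one _
  exact le_antisymm h1 h4

lemma T_subset_image (Φ : (Fin n → ℂˣ) →* (Fin n → ℂˣ))
    (hcont : Continuous Φ) (hinj : Function.Injective Φ) :
    T n ⊆ Φ '' T n := by
  have h3 : IsClosed (Φ '' T n) := (isCompact_T.image hcont).isClosed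
  calc T n ⊆ closure (Dset n) := T_subset_closure_Dset
    _ ⊆ closure (Φ '' T n) := closure_mono
        ((Dset_subset_image Φ hinj).trans (Set.image_mono Dset_subset_T))
    _ = Φ '' T n := h3.closure_eq

end Aux16

end Aux16

/-- For `n ≥ 1`, every injective continuous group homomorphism
`Φ : (ℂ*)ⁿ → (ℂ*)ⁿ` is surjective, and its inverse is a continuous group
homomorphism, so `Φ` is a topological group automorphism of `(ℂ*)ⁿ`. -/
theorem injective_continuous_endomorphism_of_torus_is_automorphism
    (n : ℕ) (hn : 1 ≤ n)
    (Φ : (Fin n → ℂˣ) →* (Fin n → ℂˣ))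
    (hcont : Continuous Φ) (hinj : Function.Injective Φ) :
    Function.Surjective Φ ∧
    ∃ Ψ : (Fin n → ℂˣ) →* (Fin n → ℂˣ),
      Continuous Ψ ∧ Function.LeftInverse Ψ Φ ∧ Function.RightInverse Ψ Φ := by
  classical
  open Aux16 in
  -- the induced map on the log-modulus coordinates
  have hf_add : ∀ t s : Fin n → ℝ,
      lam (Φ (sec (t + s))) = lam (Φ (sec t)) + lam (Φ (sec s)) := by
    intro t s
    rw [sec_add, map_mul, lam_mul]
  set F : (Fin n → ℝ) →+ (Fin n → ℝ) :=
    AddMonoidHom.mk' (fun t => lam (Φ (sec t))) hf_add with hF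
  have hFcont : Continuous F := continuous_lam.comp (hcont.comp continuous_sec)
  set L := F.toRealLinearMap hFcont with hL
  have hLapp : ∀ t, L t = lam (Φ (sec t)) := fun t => by
    rw [hL, AddMonoidHom.coe_toRealLinearMap]
    rfl
  -- key identity
  have key : ∀ x : Fin n → ℂˣ, lam (Φ x) = L (lam x) := by
    intro x
    have hu : (sec (lam x))⁻¹ * x ∈ T n := by
      rw [← lam_eq_zero_iff, lam_mul, lam_inv, lam_sec]
      abel
    have hx : x = sec (lam x) * ((sec (lam x))⁻¹ * x) := (mul_inv_cancel_left _ _).symm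
    have hΦu : lam (Φ ((sec (lam x))⁻¹ * x)) = 0 :=
      lam_eq_zero_iff.mpr (mapsTo_T Φ hcont hu)
    calc lam (Φ x) = lam (Φ (sec (lam x) * ((sec (lam x))⁻¹ * x))) := by rw [← hx]
      _ = lam (Φ (sec (lam x))) + lam (Φ ((sec (lam x))⁻¹ * x)) := by
          rw [map_mul, lam_mul]
      _ = L (lam x) := by rw [hΦu, add_zero, hLapp]
  -- L is injective hence surjective
  have hLinj : Function.Injective L := by
    intro t s hts
    have h0 : L (t - s) = 0 := by rw [map_sub, hts, sub_self]
    have hts0 : lam (Φ (sec (t - s))) = 0 := by rw [← hLapp]; exact h0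
    have hmem : Φ (sec (t - s)) ∈ T n := lam_eq_zero_iff.mp hts0
    obtain ⟨u, hu, hΦu⟩ := T_subset_image Φ hcont hinj hmem
    have : sec (t - s) = u := hinj hΦu.symm
    have hT : sec (t - s) ∈ T n := this ▸ hu
    have hts' : t - s = 0 := by
      have := lam_eq_zero_iff.mpr hT
      rwa [lam_sec] at this
    exact sub_eq_zero.mp hts'
  have hLsurj : Function.Surjective L :=
    (LinearMap.injective_iff_surjective (f := L.toLinearMap)).mp hLinj
  -- surjectivity of Φ
  have hsurj : Function.Surjective Φ := by
    intro y
    obtain ⟨t, ht⟩ := hLsurj (lam y)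
    have hlt : lam (Φ (sec t)) = lam y := by rw [← hLapp, ht]
    have h0 : lam (y * (Φ (sec t))⁻¹) = 0 := by
      rw [lam_mul, lam_inv, hlt]
      abel
    have hmem : y * (Φ (sec t))⁻¹ ∈ T n := lam_eq_zero_iff.mp h0
    obtain ⟨u, hu, hΦu⟩ := T_subset_image Φ hcont hinj hmem
    refine ⟨u * sec t, ?_⟩
    rw [map_mul, hΦu, inv_mul_cancel_right]
  -- construct the inverse
  let e : (Fin n → ℂˣ) ≃* (Fin n → ℂˣ) := MulEquiv.ofBijective Φ ⟨hinj, hsurj⟩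
  have hopen : IsOpenMap Φ := MonoidHom.isOpenMap_of_sigmaCompact Φ hsurj hcont
  have heΦ : ∀ x, e x = Φ x := fun x => rfl
  have hΨcont : Continuous e.symm := by
    rw [continuous_def]
    intro U hU
    have hpre : (⇑e.symm) ⁻¹' U = ⇑Φ '' U := by
      ext z
      constructor
      · intro hz
        refine ⟨e.symm z, hz, ?_⟩
        have := e.apply_symm_apply z
        rw [heΦ] at this
        exact this
      · rintro ⟨w, hw, rfl⟩
        have : e.symm (Φ w) = w := by
          rw [← heΦ]
          exact e.symm_apply_apply w
        rwa [Set.mem_preimage, this]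
    rw [hpre]
    exact hopen U hU
  refine ⟨hsurj, (e.symm : (Fin n → ℂˣ) →* (Fin n → ℂˣ)), ?_, ?_, ?_⟩
  · exact hΨcont
  · intro x
    show e.symm (Φ x) = x
    rw [← heΦ]
    exact e.symm_apply_apply x
  · intro x
    show Φ (e.symm x) = x
    rw [← heΦ]
    exact e.apply_symm_apply x
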